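/- Verification identity for the randomized attribute secret key in Game 2 of the malicious-sender case: let w, s, β, α, a, z, λ ∈ ZMod p with β and α invertible. Set B = g1^β, A = g1^a, R = g2^a · g2^z, d0 = g2^{(w+s)·β⁻¹}, d1' = g2^s · R^λ, d2 = g2^λ, and d3 = g2^{λ·α⁻¹}. Then e(g1, d1' · (d2^z)⁻¹) · e(g1^α, d3) · (e(B, d0) · e(g1⁻¹, g2^w))⁻¹ = e(A · g1, d2). -/

import Mathlib

/-- Exponentiation by an element of `ZMod p` via its natural-number representative. -/
def gpow {p : ℕ} {G : Type*} [Monoid G] (x : G) (a : ZMod p) : G := x ^ a.val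

section helpers
variable {p : ℕ} [Fact p.Prime] {G : Type*} [CommGroup G] {x : G}

lemma pow_mod_eq' (hx : x ^ p = 1) (n : ℕ) : x ^ (n % p) = x ^ n := by
  conv_rhs => rw [← Nat.mod_add_div n p]
  rw [pow_add, pow_mul, hx, one_pow, mul_one]

lemma gpow_add' (hx : x ^ p = 1) (a b : ZMod p) :
    gpow x (a + b) = gpow x a * gpow x b := by
  unfold gpow
  rw [ZMod.val_add, pow_mod_eq' hx, pow_add]

lemma gpow_mul' (hx : x ^ p = 1) (a b : ZMod p) :
    gpow (gpow x a) b = gpow x (a * b) := by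
  unfold gpow
  rw [ZMod.val_mul, pow_mod_eq' hx, ← pow_mul]

lemma gpow_zero' : gpow x (0 : ZMod p) = 1 := by simp [gpow]

lemma gpow_one' : gpow x (1 : ZMod p) = x := by
  haveI : Fact (1 < p) := ⟨(Fact.out : p.Prime).one_lt⟩
  simp [gpow, ZMod.val_one]

lemma gpow_neg' (hx : x ^ p = 1) (a : ZMod p) :
    gpow x (-a) = (gpow x a)⁻¹ := by
  rw [eq_inv_iff_mul_eq_one, ← gpow_add' hx, neg_add_cancel, gpow_zero']

lemma gpow_mul_base' (y : G) (a : ZMod p) :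
    gpow (x * y) a = gpow x a * gpow y a := by simp [gpow, mul_pow]

end helpers

theorem stmt_13 {p : ℕ} [Fact p.Prime]
    {G1 G2 GT : Type*} [CommGroup G1] [CommGroup G2] [CommGroup GT]
    (g1 : G1) (g2 : G2) (e : G1 → G2 → GT)
    (htor1 : ∀ x : G1, x ^ p = 1) (htor2 : ∀ y : G2, y ^ p = 1)
    (htorT : ∀ z : GT, z ^ p = 1)
    (ebil1 : ∀ (x x' : G1) (y : G2), e (x * x') y = e x y * e x' y)
    (ebil2 : ∀ (x : G1) (y y' : G2), e x (y * y') = e x y * e x y')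
    (epow : ∀ a b : ZMod p, e (gpow g1 a) (gpow g2 b) = gpow (e g1 g2) (a * b))
    (w s β α a z lam : ZMod p) (hβ : IsUnit β) (hα : IsUnit α)
    (B : G1) (hB : B = gpow g1 β)
    (A : G1) (hA : A = gpow g1 a)
    (R : G2) (hR : R = gpow g2 a * gpow g2 z)
    (d0 : G2) (hd0 : d0 = gpow g2 ((w + s) * β⁻¹))
    (d1' : G2) (hd1' : d1' = gpow g2 s * gpow R lam)
    (d2 : G2) (hd2 : d2 = gpow g2 lam)
    (d3 : G2) (hd3 : d3 = gpow g2 (lam * α⁻¹)) :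
    e g1 (d1' * (gpow d2 z)⁻¹) * e (gpow g1 α) d3 *
      (e B d0 * e g1⁻¹ (gpow g2 w))⁻¹ = e (A * g1) d2 := by
  have e1 : ∀ b : ZMod p, e g1 (gpow g2 b) = gpow (e g1 g2) b := by
    intro b
    have h := epow 1 b
    rwa [gpow_one', one_mul] at h
  have einv : ∀ y : G2, e g1⁻¹ y = (e g1 y)⁻¹ := by
    intro y
    have h := ebil1 1 1 y
    rw [mul_one] at h
    have h1 : e (1 : G1) y = 1 := right_eq_mul.mp h
    rw [eq_inv_iff_mul_eq_one, ← ebil1, inv_mul_cancel, h1]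
  subst hB hA hR hd0 hd1' hd2 hd3
  have hβ' : β ≠ 0 := hβ.ne_zero
  have hα' : α ≠ 0 := hα.ne_zero
  rw [gpow_mul_base', gpow_mul' (htor2 g2), gpow_mul' (htor2 g2),
    gpow_mul' (htor2 g2), ← gpow_neg' (htor2 g2), ← gpow_add' (htor2 g2),
    ← gpow_add' (htor2 g2), ← gpow_add' (htor2 g2), e1, epow, epow,
    einv, e1, ← gpow_neg' (htorT _), ← gpow_add' (htorT _), ← gpow_add' (htorT _),
    ← gpow_neg' (htorT _), ← gpow_add' (htorT _), ebil1, epow, e1,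
    ← gpow_add' (htorT _)]
  congr 1
  field_simp
  ring
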